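/- Under the stated assumptions on the proximal point iteration, the sequence {p^k} is Fejér convergent to Ω̄ := ∩_{k≥0} Ω_k: for every w ∈ Ω̄ and every k ∈ ℕ, ‖w − p^{k+1}‖ ≤ ‖w − p^k‖. In particular {p^k} is bounded. -/

import Mathlib

open RealInnerProductSpace

lemma inner_pos_aux {m : ℕ} {Z : Set (EuclideanSpace ℝ (Fin m))}
    (hZ0 : (0 : EuclideanSpace ℝ (Fin m)) ∉ Z)
    {e : EuclideanSpace ℝ (Fin m)}
    (he : e ∈ interior {y : EuclideanSpace ℝ (Fin m) | ∀ z ∈ Z, 0 ≤ ⟪y, z⟫})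
    {z : EuclideanSpace ℝ (Fin m)} (hz : z ∈ Z) : 0 < ⟪e, z⟫ := by
  have hzne : z ≠ 0 := fun h => hZ0 (h ▸ hz)
  have hznorm : 0 < ‖z‖ := norm_pos_iff.2 hzne
  rw [mem_interior_iff_mem_nhds, Metric.mem_nhds_iff] at he
  obtain ⟨ε, hε, hball⟩ := he
  have hmem : e - (ε / (2 * ‖z‖)) • z ∈ Metric.ball e ε := by
    simp only [Metric.mem_ball, dist_eq_norm]
    rw [sub_sub_cancel_left, norm_neg, norm_smul]
    rw [Real.norm_eq_abs, abs_of_pos (by positivity)]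
    have h1 : ε / (2 * ‖z‖) * ‖z‖ = ε / 2 := by field_simp
    linarith
  have := hball hmem z hz
  rw [inner_sub_left, real_inner_smul_left] at this
  have h2 : ⟪z, z⟫ = ‖z‖ ^ 2 := real_inner_self_eq_norm_sq z
  have h3 : ε / (2 * ‖z‖) * ‖z‖ ^ 2 = ε * ‖z‖ / 2 := by field_simp
  rw [h2, h3] at this
  have h4 : 0 < ε * ‖z‖ / 2 := by positivity
  linarith

theorem proximal_sequence_fejer {m : ℕ} (hm : 1 ≤ m)
    (Z : Set (EuclideanSpace ℝ (Fin m))) (hZne : Z.Nonempty) (hZcomp : IsCompact Z)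
    (hZ0 : (0 : EuclideanSpace ℝ (Fin m)) ∉ Z)
    (C : Set (EuclideanSpace ℝ (Fin m)))
    (hC : C = {y : EuclideanSpace ℝ (Fin m) | ∀ z ∈ Z, 0 ≤ ⟪y, z⟫})
    {n : ℕ} (hn : 1 ≤ n) (F : EuclideanSpace ℝ (Fin n) → EuclideanSpace ℝ (Fin m))
    (hFcont : Continuous F)
    (hFconv : ∀ x y : EuclideanSpace ℝ (Fin n), ∀ t ∈ Set.Icc (0 : ℝ) 1,
      t • F x + (1 - t) • F y - F (t • x + (1 - t) • y) ∈ C)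
    (lam : ℕ → ℝ) (hlampos : ∀ k, 0 < lam k) (hlambdd : ∃ B : ℝ, ∀ k, lam k ≤ B)
    (ek : ℕ → EuclideanSpace ℝ (Fin m))
    (hek : ∀ k, ek k ∈ interior C ∧ ‖ek k‖ = 1)
    (fk : ℕ → EuclideanSpace ℝ (Fin m) → ℝ)
    (hfk : ∀ k y, fk k y = sSup ((fun z => ⟪y, z⟫ / ⟪ek k, z⟫) '' Z))
    (p : ℕ → EuclideanSpace ℝ (Fin n))
    (hiter : ∀ k : ℕ, F (p k) - F (p (k + 1)) ∈ C ∧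
      ∀ q : EuclideanSpace ℝ (Fin n), F (p k) - F q ∈ C →
        fk k (F (p (k + 1)) + (lam k / 2 * ‖p (k + 1) - p k‖ ^ 2) • ek k)
          ≤ fk k (F q + (lam k / 2 * ‖q - p k‖ ^ 2) • ek k))
    (hΩbar : (⋂ k : ℕ, {q : EuclideanSpace ℝ (Fin n) | F (p k) - F q ∈ C}).Nonempty) :
    (∀ w ∈ ⋂ k : ℕ, {q : EuclideanSpace ℝ (Fin n) | F (p k) - F q ∈ C},
      ∀ k : ℕ, ‖w - p (k + 1)‖ ≤ ‖w - p k‖) ∧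
    (∃ (c : EuclideanSpace ℝ (Fin n)) (r : ℝ), ∀ k : ℕ, p k ∈ Metric.closedBall c r) := by
  subst hC
  have key : ∀ w ∈ ⋂ k : ℕ,
      {q : EuclideanSpace ℝ (Fin n) | F (p k) - F q ∈
        {y : EuclideanSpace ℝ (Fin m) | ∀ z ∈ Z, 0 ≤ ⟪y, z⟫}},
      ∀ k : ℕ, ‖w - p (k + 1)‖ ≤ ‖w - p k‖ := by
    intro w hw k
    have hwk : ∀ j, ∀ z ∈ Z, 0 ≤ ⟪F (p j) - F w, z⟫ := fun j => Set.mem_iInter.1 hw j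
    have hepos : ∀ z ∈ Z, 0 < ⟪ek k, z⟫ := fun z hz => inner_pos_aux hZ0 (hek k).1 hz
    -- basic facts about the scalarization f_k
    have hcont : ∀ y : EuclideanSpace ℝ (Fin m),
        ContinuousOn (fun z => ⟪y, z⟫ / ⟪ek k, z⟫) Z := by
      intro y
      exact ContinuousOn.div
        ((continuous_const.inner continuous_id).continuousOn)
        ((continuous_const.inner continuous_id).continuousOn)
        (fun z hz => (hepos z hz).ne')
    have hbdd : ∀ y : EuclideanSpace ℝ (Fin m),
        BddAbove ((fun z => ⟪y, z⟫ / ⟪ek k, z⟫) '' Z) :=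
      fun y => hZcomp.bddAbove_image (hcont y)
    have hne : ∀ y : EuclideanSpace ℝ (Fin m),
        ((fun z => ⟪y, z⟫ / ⟪ek k, z⟫) '' Z).Nonempty := fun y => hZne.image _
    have hshift : ∀ (y : EuclideanSpace ℝ (Fin m)) (s : ℝ),
        fk k (y + s • ek k) = fk k y + s := by
      intro y s
      rw [hfk, hfk]
      have himg : (fun z => ⟪y + s • ek k, z⟫ / ⟪ek k, z⟫) '' Z
          = (fun x => x + s) '' ((fun z => ⟪y, z⟫ / ⟪ek k, z⟫) '' Z) := by
        rw [Set.image_image]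
        apply Set.image_congr
        intro z hz
        rw [inner_add_left, real_inner_smul_left, add_div,
          mul_div_assoc, div_self (hepos z hz).ne', mul_one]
      rw [himg]
      exact (Monotone.map_csSup_of_continuousAt
        ((continuous_id.add continuous_const).continuousAt)
        (fun a b hab => by simpa using add_le_add_right hab s)
        (hne y) (hbdd y)).symm
    have hmono : ∀ y y' : EuclideanSpace ℝ (Fin m),
        (∀ z ∈ Z, ⟪y, z⟫ ≤ ⟪y', z⟫) → fk k y ≤ fk k y' := by
      intro y y' h
      rw [hfk, hfk]
      apply csSup_le (hne y)
      rintro x ⟨z, hz, rfl⟩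
      refine le_trans ?_ (le_csSup (hbdd y') ⟨z, hz, rfl⟩)
      exact (div_le_div_iff_of_pos_right (hepos z hz)).2 (h z hz)
    obtain ⟨hΩ, hmin⟩ := hiter k
    -- step 1 : for all t ∈ (0,1], ‖p(k+1)-p k‖² ≤ ‖(t•w+(1-t)•p(k+1)) - p k‖²
    have step1 : ∀ t ∈ Set.Ioc (0:ℝ) 1,
        ‖p (k+1) - p k‖ ^ 2 ≤ ‖(t • w + (1-t) • p (k+1)) - p k‖ ^ 2 := by
      intro t ht
      set q := t • w + (1-t) • p (k+1) with hq
      have hIcc : t ∈ Set.Icc (0:ℝ) 1 := ⟨ht.1.le, ht.2⟩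
      have hconv := hFconv w (p (k+1)) t hIcc
      have hqΩ : F (p k) - F q ∈
          {y : EuclideanSpace ℝ (Fin m) | ∀ z ∈ Z, 0 ≤ ⟪y, z⟫} := by
        intro z hz
        have h1 : (0:ℝ) ≤ ⟪F (p k) - F (p (k+1)), z⟫ := hΩ z hz
        have h2 : (0:ℝ) ≤ ⟪F (p k) - F w, z⟫ := hwk k z hz
        have h3 : (0:ℝ) ≤ ⟪t • F w + (1-t) • F (p (k+1)) - F q, z⟫ := hconv z hz
        simp only [inner_sub_left, inner_add_left, real_inner_smul_left] at h1 h2 h3 ⊢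
        nlinarith [mul_nonneg ht.1.le h2, mul_nonneg (sub_nonneg.2 ht.2) h1]
      have hle := hmin q hqΩ
      have hmono2 : fk k (F q + (lam k / 2 * ‖q - p k‖ ^ 2) • ek k)
          ≤ fk k (F (p (k+1)) + (lam k / 2 * ‖q - p k‖ ^ 2) • ek k) := by
        apply hmono
        intro z hz
        have h3 : (0:ℝ) ≤ ⟪t • F w + (1-t) • F (p (k+1)) - F q, z⟫ := hconv z hz
        have h4 : (0:ℝ) ≤ ⟪F (p (k+1)) - F w, z⟫ := hwk (k+1) z hz
        simp only [inner_sub_left, inner_add_left, real_inner_smul_left] at h3 h4 ⊢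
        nlinarith [mul_nonneg ht.1.le h4]
      have hchain := le_trans hle hmono2
      rw [hshift, hshift] at hchain
      have hlam := hlampos k
      nlinarith [hchain]
    -- step 2 : 0 ≤ ⟪p(k+1) - p k, w - p(k+1)⟫
    set a := p (k+1) - p k with ha
    set b := w - p (k+1) with hb
    have hab : 0 ≤ ⟪a, b⟫ := by
      by_contra h
      push_neg at h
      have hbne : b ≠ 0 := by
        intro hb0
        rw [hb0, inner_zero_right] at h
        exact absurd h (lt_irrefl 0)
      have hbb : 0 < ⟪b, b⟫ := by
        rw [real_inner_self_eq_norm_sq]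
        have : 0 < ‖b‖ := norm_pos_iff.2 hbne
        positivity
      set t := min 1 (-⟪a, b⟫ / ⟪b, b⟫) with htdef
      have ht : t ∈ Set.Ioc (0:ℝ) 1 :=
        ⟨lt_min one_pos (div_pos (neg_pos.2 h) hbb), min_le_left _ _⟩
      have hstep := step1 t ht
      have hqpk : (t • w + (1-t) • p (k+1)) - p k = a + t • b := by
        rw [ha, hb]; module
      rw [hqpk] at hstep
      rw [← real_inner_self_eq_norm_sq, ← real_inner_self_eq_norm_sq,
        real_inner_add_add_self] at hstep
      simp only [real_inner_smul_left, real_inner_smul_right] at hstep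
      have htB : t * ⟪b, b⟫ ≤ -⟪a, b⟫ := by
        rw [← le_div_iff₀ hbb]
        exact min_le_right _ _
      nlinarith [mul_pos ht.1 (neg_pos.2 h),
        mul_le_mul_of_nonneg_left htB ht.1.le]
    -- conclude
    have hdecomp : w - p k = b + a := by rw [ha, hb]; module
    have hsq : ‖w - p (k+1)‖ ^ 2 ≤ ‖w - p k‖ ^ 2 := by
      rw [hdecomp, ← hb, ← real_inner_self_eq_norm_sq, ← real_inner_self_eq_norm_sq,
        real_inner_add_add_self]
      have hcomm : ⟪b, a⟫ = ⟪a, b⟫ := real_inner_comm a b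
      nlinarith [real_inner_self_nonneg (x := a)]
    nlinarith [norm_nonneg (w - p k), norm_nonneg (w - p (k+1)), hsq]
  refine ⟨key, ?_⟩
  obtain ⟨w, hw⟩ := hΩbar
  refine ⟨w, ‖w - p 0‖, ?_⟩
  have hmonod : ∀ k, ‖w - p k‖ ≤ ‖w - p 0‖ := by
    intro k
    induction k with
    | zero => exact le_refl _
    | succ k ih => exact le_trans (key w hw k) ih
  intro k
  rw [Metric.mem_closedBall, dist_comm, dist_eq_norm]
  exact hmonod k
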